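/- There exists a constant C ≥ 1, depending only on the dimension d, such that Σ_{q=1}^Q 1_{R_q} ≤ C · K · max(1, ‖x‖_∞ / t). -/

import Mathlib

open scoped ENNReal

noncomputable section

/-- `ℤ^d`. -/
abbrev Zd (d : ℕ) := Fin d → ℤ

/-- The `ℓ¹`-norm on `ℤ^d`. -/
def norm1 {d : ℕ} (x : Zd d) : ℝ := ∑ i, |(x i : ℝ)|

/-- The `ℓ^∞`-norm on `ℤ^d`. -/
def normInf {d : ℕ} (x : Zd d) : ℝ := ((Finset.univ.sup fun i => (x i).natAbs : ℕ) : ℝ)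

/-- Given a frozen environment (`ωe z` = number of frogs initially at `z`,
`Se z ℓ k` = position at time `k` of the `ℓ`-th frog started at `z`), the passage time
`τ(x,y)`: the first time at which one of the frogs initially at `x` hits `y`
(`∞` if there is no such time, in particular if `ωe x = 0`). -/
def tauE {d : ℕ} (ωe : Zd d → ℕ) (Se : Zd d → ℕ → ℕ → Zd d) (x y : Zd d) : ℝ≥0∞ :=
  sInf {r : ℝ≥0∞ | ∃ k : ℕ, (∃ ℓ : ℕ, 1 ≤ ℓ ∧ ℓ ≤ ωe x ∧ Se x ℓ k = y) ∧ r = k}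

open Classical in
/-- The truncated two-point function `σ_t(x,y)` (with cut-off constant `K`):
`σ_t(x,y) = 4Kt` if `‖x−y‖_∞ ≤ t` and `τ(x,y) > 4Kt`; `σ_t(x,y) = 4K‖x−y‖_∞` if
`‖x−y‖_∞ > t`; and `σ_t(x,y) = τ(x,y)` otherwise. -/
def sigmaE {d : ℕ} (K : ℕ) (t : ℝ) (ωe : Zd d → ℕ) (Se : Zd d → ℕ → ℕ → Zd d)
    (x y : Zd d) : ℝ≥0∞ :=
  if normInf (x - y) ≤ t then min (tauE ωe Se x y) (ENNReal.ofReal (4 * K * t))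
  else ENNReal.ofReal (4 * K * normInf (x - y))

/-- The truncated first passage time `T_t(x,y)` associated with `σ_t`, for a frozen
environment. -/
def TtE {d : ℕ} (K : ℕ) (t : ℝ) (ωe : Zd d → ℕ) (Se : Zd d → ℕ → ℕ → Zd d)
    (x y : Zd d) : ℝ≥0∞ :=
  sInf {r : ℝ≥0∞ | ∃ m : ℕ, 1 ≤ m ∧ ∃ c : ℕ → Zd d, c 0 = x ∧ c m = y ∧
    r = ∑ i ∈ Finset.range m, sigmaE K t ωe Se (c i) (c (i + 1))}

/-- The box of the tiling of `ℤ^d` by copies of `(−t/2, t/2]^d` centered at `c ∈ ℤ^d`. -/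
def tBox {d : ℕ} (t : ℝ) (c : Zd d) : Set (Zd d) :=
  {z | ∀ i, (c i : ℝ) - t / 2 < z i ∧ (z i : ℝ) ≤ c i + t / 2}

lemma norm1_nonneg {d : ℕ} (x : Zd d) : 0 ≤ norm1 x :=
  Finset.sum_nonneg fun _ _ => abs_nonneg _

lemma coord_abs_le_norm1 {d : ℕ} (x : Zd d) (i : Fin d) : |(x i : ℝ)| ≤ norm1 x :=
  Finset.single_le_sum (fun j _ => abs_nonneg ((x j : ℝ))) (Finset.mem_univ i)

lemma norm1_neg {d : ℕ} (x : Zd d) : norm1 (-x) = norm1 x := by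
  unfold norm1; apply Finset.sum_congr rfl; intro i _
  simp [Pi.neg_apply]

lemma norm1_sub_rev {d : ℕ} (x y : Zd d) : norm1 (x - y) = norm1 (y - x) := by
  rw [← norm1_neg (x - y)]; congr 1; abel

lemma norm1_sub_le {d : ℕ} (x y z : Zd d) : norm1 (x - z) ≤ norm1 (x - y) + norm1 (y - z) := by
  unfold norm1
  rw [← Finset.sum_add_distrib]
  apply Finset.sum_le_sum; intro i _
  have h : ((x - z) i : ℝ) = ((x - y) i : ℝ) + ((y - z) i : ℝ) := by
    simp only [Pi.sub_apply]; push_cast; ring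
  rw [h]; exact abs_add_le _ _

lemma normInf_nonneg {d : ℕ} (x : Zd d) : 0 ≤ normInf x := Nat.cast_nonneg _

lemma coord_abs_le_normInf {d : ℕ} (x : Zd d) (i : Fin d) : |(x i : ℝ)| ≤ normInf x := by
  have h : (x i).natAbs ≤ Finset.univ.sup fun j => (x j).natAbs :=
    Finset.le_sup (f := fun j => (x j).natAbs) (Finset.mem_univ i)
  calc |(x i : ℝ)| = ((x i).natAbs : ℝ) := by
        rw [Nat.cast_natAbs]; push_cast; rfl
    _ ≤ _ := by unfold normInf; exact_mod_cast h

lemma norm1_le_d_normInf {d : ℕ} (x : Zd d) : norm1 x ≤ d * normInf x := by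
  unfold norm1
  calc ∑ i, |(x i : ℝ)| ≤ ∑ _i : Fin d, normInf x :=
        Finset.sum_le_sum fun i _ => coord_abs_le_normInf x i
    _ = d * normInf x := by simp [Finset.sum_const, Finset.card_univ]

lemma normInf_sub_rev {d : ℕ} (x y : Zd d) : normInf (x - y) = normInf (y - x) := by
  unfold normInf
  congr 1
  apply Finset.sup_congr rfl
  intro i _
  have : (x - y) i = -((y - x) i) := by simp [Pi.sub_apply]
  rw [this, Int.natAbs_neg]

lemma normInf_zero_sub {d : ℕ} (x : Zd d) : normInf ((0 : Zd d) - x) = normInf x := by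
  rw [normInf_sub_rev]; congr 1; abel

lemma tauE_ge {d : ℕ} (ωe : Zd d → ℕ) (Se : Zd d → ℕ → ℕ → Zd d)
    (hS0 : ∀ z ℓ, Se z ℓ 0 = z) (hstep : ∀ z ℓ k, norm1 (Se z ℓ (k + 1) - Se z ℓ k) = 1)
    (x y : Zd d) : ENNReal.ofReal (norm1 (x - y)) ≤ tauE ωe Se x y := by
  apply le_sInf
  rintro r ⟨k, ⟨ℓ, -, -, hk⟩, rfl⟩
  have key : ∀ n : ℕ, norm1 (x - Se x ℓ n) ≤ n := by
    intro n
    induction n with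
    | zero => rw [hS0]; simp [norm1]
    | succ n ih =>
      have h2 : norm1 (Se x ℓ n - Se x ℓ (n + 1)) = 1 := by
        rw [norm1_sub_rev]; exact hstep x ℓ n
      have h3 := norm1_sub_le x (Se x ℓ n) (Se x ℓ (n + 1))
      push_cast
      push_cast at ih
      linarith
  calc ENNReal.ofReal (norm1 (x - y)) ≤ ENNReal.ofReal k := by
        apply ENNReal.ofReal_le_ofReal
        rw [← hk]; exact key k
    _ = (k : ℝ≥0∞) := ENNReal.ofReal_natCast k
    
lemma sigmaE_ge {d : ℕ} (K : ℕ) (t : ℝ) (ht : 0 < t) (hK : (d : ℝ) ≤ 4 * K)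
    (ωe : Zd d → ℕ) (Se : Zd d → ℕ → ℕ → Zd d)
    (hS0 : ∀ z ℓ, Se z ℓ 0 = z) (hstep : ∀ z ℓ k, norm1 (Se z ℓ (k + 1) - Se z ℓ k) = 1)
    (x y : Zd d) : ENNReal.ofReal (norm1 (x - y)) ≤ sigmaE K t ωe Se x y := by
  unfold sigmaE
  split_ifs with h
  · refine le_min (tauE_ge ωe Se hS0 hstep x y) (ENNReal.ofReal_le_ofReal ?_)
    calc norm1 (x - y) ≤ d * normInf (x - y) := norm1_le_d_normInf _
      _ ≤ (4 * K) * t := by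
          apply mul_le_mul hK h (normInf_nonneg _) (by positivity)
      _ = 4 * K * t := by ring
  · apply ENNReal.ofReal_le_ofReal
    calc norm1 (x - y) ≤ d * normInf (x - y) := norm1_le_d_normInf _
      _ ≤ 4 * K * normInf (x - y) :=
          mul_le_mul_of_nonneg_right hK (normInf_nonneg _)

lemma TtE_le_sigmaE {d : ℕ} (K : ℕ) (t : ℝ) (ωe : Zd d → ℕ) (Se : Zd d → ℕ → ℕ → Zd d)
    (x y : Zd d) : TtE K t ωe Se x y ≤ sigmaE K t ωe Se x y := by
  apply sInf_le
  refine ⟨1, le_rfl, fun i => if i = 0 then x else y, by simp, by simp, by simp⟩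

/-- Points pairwise within `ℓ¹`-distance `t` meet at most `7^d` boxes of the tiling. -/
lemma centers_card_le {d : ℕ} (t : ℝ) (ht : 0 < t) (cent : Zd d → Zd d)
    (hmem : ∀ z, z ∈ tBox t (cent z)) (hcons : ∀ z w, w ∈ tBox t (cent z) → cent w = cent z)
    (F : Finset ℕ) (f : ℕ → Zd d)
    (hclose : ∀ i ∈ F, ∀ j ∈ F, norm1 (f i - f j) ≤ t) :
    (F.image fun i => cent (f i)).card ≤ 7 ^ d := by
  rcases F.eq_empty_or_nonempty with rfl | ⟨i₀, hi₀⟩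
  · simp
  set p : Zd d := f i₀ with hp
  set s₀ : ℝ := max 1 (t / 2) with hs₀
  have hs₀pos : 0 < s₀ := lt_of_lt_of_le one_pos (le_max_left _ _)
  have hs₀t : t / 2 ≤ s₀ := le_max_right _ _
  have hself : ∀ i, cent (cent (f i)) = cent (f i) := by
    intro i
    apply hcons
    intro j
    constructor
    · linarith
    · linarith
  have hcoord : ∀ i ∈ F, ∀ j : Fin d, |((cent (f i)) j : ℝ) - (p j : ℝ)| ≤ 3 * s₀ := by
    intro i hi j
    have h1 := (hmem (f i)) j
    have h2 : |((f i) j : ℝ) - ((p : Zd d) j : ℝ)| ≤ t := by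
      have hco := coord_abs_le_norm1 (f i - p) j
      have h3 := hclose i hi i₀ hi₀
      simp only [Pi.sub_apply] at hco
      push_cast at hco
      linarith
    have h4 : |((cent (f i)) j : ℝ) - ((f i) j : ℝ)| ≤ t / 2 := by
      rw [abs_le]; constructor
      · linarith [h1.2]
      · linarith [h1.1]
    calc |((cent (f i)) j : ℝ) - (p j : ℝ)|
        ≤ |((cent (f i)) j : ℝ) - ((f i) j : ℝ)| + |((f i) j : ℝ) - (p j : ℝ)| := by
          have := abs_sub_le ((cent (f i)) j : ℝ) ((f i) j : ℝ) (p j : ℝ)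
          linarith
      _ ≤ t / 2 + t := add_le_add h4 h2
      _ ≤ 3 * s₀ := by linarith
  set G : Zd d → Zd d := fun c j => ⌊(c j : ℝ) / s₀⌋ with hG
  set lo : Zd d := fun j => ⌊((p : Zd d) j : ℝ) / s₀⌋ - 3 with hlo
  set hi : Zd d := fun j => ⌊((p : Zd d) j : ℝ) / s₀⌋ + 3 with hhi
  have hmaps : ∀ c ∈ F.image fun i => cent (f i), G c ∈ Finset.Icc lo hi := by
    intro c hc
    rcases Finset.mem_image.mp hc with ⟨i, hi', rfl⟩
    rw [Finset.mem_Icc]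
    constructor <;> (rw [Pi.le_def]; intro j) <;>
      simp only [hG, hlo, hhi] <;>
      obtain ⟨hb1, hb2⟩ := abs_le.mp (hcoord i hi' j)
    · -- lower
      have hdiv : (((p : Zd d) j : ℝ) - ((cent (f i)) j : ℝ)) / s₀ ≤ 3 :=
        (div_le_iff₀ hs₀pos).mpr (by linarith)
      have hsd : (((p : Zd d) j : ℝ) - ((cent (f i)) j : ℝ)) / s₀
          = ((p : Zd d) j : ℝ) / s₀ - ((cent (f i)) j : ℝ) / s₀ := sub_div _ _ _
      have hle : ((p : Zd d) j : ℝ) / s₀ ≤ ((cent (f i)) j : ℝ) / s₀ + ((3 : ℤ) : ℝ) := by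
        push_cast
        linarith
      rw [sub_le_iff_le_add]
      calc ⌊((p : Zd d) j : ℝ) / s₀⌋ ≤ ⌊((cent (f i)) j : ℝ) / s₀ + ((3 : ℤ) : ℝ)⌋ :=
            Int.floor_mono hle
        _ = ⌊((cent (f i)) j : ℝ) / s₀⌋ + 3 := Int.floor_add_intCast _ _
    · -- upper
      have hdiv : (((cent (f i)) j : ℝ) - ((p : Zd d) j : ℝ)) / s₀ ≤ 3 :=
        (div_le_iff₀ hs₀pos).mpr (by linarith)
      have hsd : (((cent (f i)) j : ℝ) - ((p : Zd d) j : ℝ)) / s₀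
          = ((cent (f i)) j : ℝ) / s₀ - ((p : Zd d) j : ℝ) / s₀ := sub_div _ _ _
      have hle : ((cent (f i)) j : ℝ) / s₀ ≤ ((p : Zd d) j : ℝ) / s₀ + ((3 : ℤ) : ℝ) := by
        push_cast
        linarith [Int.floor_le (((p : Zd d) j : ℝ) / s₀)]
      calc ⌊((cent (f i)) j : ℝ) / s₀⌋ ≤ ⌊((p : Zd d) j : ℝ) / s₀ + ((3 : ℤ) : ℝ)⌋ :=
            Int.floor_mono hle
        _ = ⌊((p : Zd d) j : ℝ) / s₀⌋ + 3 := Int.floor_add_intCast _ _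
  have hinj : Set.InjOn G (F.image fun i => cent (f i)) := by
    intro c hc c' hc' hGe
    rcases Finset.mem_image.mp hc with ⟨i, hi', rfl⟩
    rcases Finset.mem_image.mp hc' with ⟨i', hi'', rfl⟩
    have hlt : ∀ j : Fin d, |((cent (f i)) j : ℝ) - ((cent (f i')) j : ℝ)| < t / 2 := by
      intro j
      have he : ⌊((cent (f i)) j : ℝ) / s₀⌋ = ⌊((cent (f i')) j : ℝ) / s₀⌋ :=
        congrFun hGe j
      have h1 := Int.floor_le (((cent (f i)) j : ℝ) / s₀)
      have h2 := Int.lt_floor_add_one (((cent (f i)) j : ℝ) / s₀)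
      have h3 := Int.floor_le (((cent (f i')) j : ℝ) / s₀)
      have h4 := Int.lt_floor_add_one (((cent (f i')) j : ℝ) / s₀)
      rw [he] at h1 h2
      have hdiff : |((cent (f i)) j : ℝ) / s₀ - ((cent (f i')) j : ℝ) / s₀| < 1 :=
        abs_lt.mpr ⟨by linarith, by linarith⟩
      have key : ((cent (f i)) j : ℝ) - ((cent (f i')) j : ℝ)
          = (((cent (f i)) j : ℝ) / s₀ - ((cent (f i')) j : ℝ) / s₀) * s₀ := by
        field_simp
      have habs : |((cent (f i)) j : ℝ) - ((cent (f i')) j : ℝ)| < s₀ := by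
        calc |((cent (f i)) j : ℝ) - ((cent (f i')) j : ℝ)|
            = |((cent (f i)) j : ℝ) / s₀ - ((cent (f i')) j : ℝ) / s₀| * s₀ := by
              rw [key, abs_mul, abs_of_pos hs₀pos]
          _ < 1 * s₀ := mul_lt_mul_of_pos_right hdiff hs₀pos
          _ = s₀ := one_mul _
      rcases eq_or_ne ((cent (f i)) j) ((cent (f i')) j) with heq | hne
      · rw [heq]; simpa using half_pos ht
      · have h5 : (1 : ℝ) ≤ |((cent (f i)) j : ℝ) - ((cent (f i')) j : ℝ)| := by
          have h6 : (1 : ℤ) ≤ |(cent (f i)) j - (cent (f i')) j| :=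
            Int.one_le_abs (sub_ne_zero_of_ne hne)
          calc (1 : ℝ) = ((1 : ℤ) : ℝ) := by norm_num
            _ ≤ ((|(cent (f i)) j - (cent (f i')) j| : ℤ) : ℝ) := by exact_mod_cast h6
            _ = _ := by push_cast; rfl
        rcases le_or_gt 1 (t / 2) with hcase | hcase
        · rw [hs₀, max_eq_right hcase] at habs
          exact habs
        · exfalso
          rw [hs₀, max_eq_left hcase.le] at habs
          linarith
    have hbox : cent (f i) ∈ tBox t (cent (f i')) := by
      intro j
      obtain ⟨ha, hb⟩ := abs_lt.mp (hlt j)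
      constructor
      · linarith
      · linarith
    have heq2 := hcons (f i') (cent (f i)) hbox
    rw [← hself i, heq2]
  calc (F.image fun i => cent (f i)).card ≤ (Finset.Icc lo hi).card :=
        Finset.card_le_card_of_injOn G hmaps hinj
    _ = 7 ^ d := by
        rw [Pi.card_Icc]
        have hcard : ∀ j : Fin d, (Finset.Icc (lo j) (hi j)).card = 7 := by
          intro j
          rw [Int.card_Icc]
          simp only [hlo, hhi]
          omega
        rw [Finset.prod_congr rfl fun j _ => hcard j]
        simp

set_option maxHeartbeats 1000000 in
/-- **Lemma 4.5.**
There is a constant `C ≥ 1`, depending only on the dimension `d`, with the following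
property. Tile `ℤ^d` by copies `Λ_q` of `(−t/2, t/2]^d` centered at points of `ℤ^d`
(encoded by the map `cent` sending a site to the center of its box). If `π_t(0,x)` is a
path realizing `T_t(0,x)`, then the number of boxes of the tiling met by `π_t(0,x)`, i.e.
`∑_q 1_{R_q}`, is at most `C K max(1, ‖x‖_∞ / t)`. -/
theorem frog_path_visits_few_boxes (d : ℕ) (hd : 2 ≤ d) :
    ∃ C : ℝ, 1 ≤ C ∧
      ∀ (C₀ γ : ℝ), 0 < C₀ → 0 < γ →
      ∀ K : ℕ, (d : ℝ) * (C₀ + γ + 1) < K →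
      ∀ t : ℝ, 0 < t →
      ∀ (ωe : Zd d → ℕ) (Se : Zd d → ℕ → ℕ → Zd d),
        (∀ z ℓ, Se z ℓ 0 = z) → (∀ z ℓ k, norm1 (Se z ℓ (k + 1) - Se z ℓ k) = 1) →
      ∀ cent : Zd d → Zd d,
        (∀ z, z ∈ tBox t (cent z)) → (∀ z w, w ∈ tBox t (cent z) → cent w = cent z) →
      ∀ x : Zd d, x ≠ 0 →
      ∀ (m : ℕ) (π : ℕ → Zd d), 1 ≤ m → π 0 = 0 → π m = x →
        ∑ i ∈ Finset.range m, sigmaE K t ωe Se (π i) (π (i + 1)) = TtE K t ωe Se 0 x →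
        (((Finset.range (m + 1)).image fun i => cent (π i)).card : ℝ)
          ≤ C * K * max 1 (normInf x / t) := by
  have h7 : (1 : ℝ) ≤ 7 ^ d := one_le_pow₀ (by norm_num)
  have h7' : (0 : ℝ) < 7 ^ d := by positivity
  refine ⟨5 * 7 ^ d, by nlinarith, ?_⟩
  intro C₀ γ hC₀ hγ K hK t ht ωe Se hS0 hstep cent hmem hcons x hx m π hm hπ0 hπm hopt
  have hd' : (2 : ℝ) ≤ (d : ℝ) := by exact_mod_cast hd
  have hK1 : (1 : ℝ) ≤ (K : ℝ) := by nlinarith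
  have hKd : (d : ℝ) ≤ 4 * K := by nlinarith
  set M : ℝ := max 1 (normInf x / t) with hM
  have hM1 : (1 : ℝ) ≤ M := le_max_left _ _
  set Lmax : ℝ := 4 * K * max t (normInf x) with hLmax
  have hxnn : (0 : ℝ) ≤ normInf x := normInf_nonneg x
  have hLmaxnn : (0 : ℝ) ≤ Lmax := by
    have : (0:ℝ) ≤ max t (normInf x) := le_trans ht.le (le_max_left _ _)
    positivity
  set L : ℕ → ℝ := fun i => norm1 (π (i + 1) - π i) with hL
  set s : ℕ → ℝ := fun n => ∑ j ∈ Finset.range n, L j with hs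
  have hLnn : ∀ i, 0 ≤ L i := fun i => norm1_nonneg _
  have hsnn : ∀ n, 0 ≤ s n := fun n => Finset.sum_nonneg fun j _ => hLnn j
  have hsmono : ∀ i j : ℕ, i ≤ j → s i ≤ s j := by
    intro i j hij
    apply Finset.sum_le_sum_of_subset_of_nonneg (Finset.range_subset_range.mpr hij)
    intro k _ _; exact hLnn k
  have hpath : ∀ i j : ℕ, i ≤ j → norm1 (π j - π i) ≤ s j - s i := by
    intro i j hij
    induction j, hij using Nat.le_induction with
    | base => simp [norm1]
    | succ j hij ih =>
      have h1 := norm1_sub_le (π (j + 1)) (π j) (π i)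
      have h2 : s (j + 1) = s j + L j := Finset.sum_range_succ L j
      have h3 : norm1 (π (j + 1) - π j) = L j := rfl
      linarith
  -- total length bound
  have hsum_le : s m ≤ Lmax := by
    have h1 : ENNReal.ofReal (s m) ≤ ∑ i ∈ Finset.range m, sigmaE K t ωe Se (π i) (π (i + 1)) := by
      rw [hs]
      rw [ENNReal.ofReal_sum_of_nonneg fun i _ => hLnn i]
      apply Finset.sum_le_sum
      intro i _
      have := sigmaE_ge K t ht hKd ωe Se hS0 hstep (π i) (π (i + 1))
      rwa [norm1_sub_rev (π i) (π (i+1))] at this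
    have h3 : TtE K t ωe Se 0 x ≤ ENNReal.ofReal Lmax := by
      refine le_trans (TtE_le_sigmaE K t ωe Se 0 x) ?_
      unfold sigmaE
      split_ifs with hcase
      · refine le_trans (min_le_right _ _) (ENNReal.ofReal_le_ofReal ?_)
        rw [hLmax]
        have : t ≤ max t (normInf x) := le_max_left _ _
        nlinarith
      · apply ENNReal.ofReal_le_ofReal
        rw [normInf_zero_sub, hLmax]
        have : normInf x ≤ max t (normInf x) := le_max_right _ _
        nlinarith
    have h4 : ENNReal.ofReal (s m) ≤ ENNReal.ofReal Lmax := by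
      rw [hopt] at h1
      exact le_trans h1 h3
    exact (ENNReal.ofReal_le_ofReal_iff hLmaxnn).mp h4
  -- windows
  set g : ℕ → ℤ := fun i => ⌊s i / t⌋ with hg
  set B : ℤ := ⌊Lmax / t⌋ with hB
  have hBnn : 0 ≤ B := Int.floor_nonneg.mpr (div_nonneg hLmaxnn ht.le)
  have himg : ((Finset.range (m + 1)).image g) ⊆ Finset.Icc 0 B := by
    intro v hv
    rcases Finset.mem_image.mp hv with ⟨i, hi, rfl⟩
    have hi' : i ≤ m := Nat.lt_succ_iff.mp (Finset.mem_range.mp hi)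
    rw [Finset.mem_Icc]
    constructor
    · exact Int.floor_nonneg.mpr (div_nonneg (hsnn i) ht.le)
    · apply Int.floor_mono
      gcongr
      exact le_trans (hsmono i m hi') hsum_le
  have hst : ∀ i j : ℕ, g i = g j → s j - s i < t := by
    intro i j hgij
    simp only [hg] at hgij
    have h1 := Int.floor_le (s i / t)
    have h2 := Int.lt_floor_add_one (s j / t)
    rw [← hgij] at h2
    have h3 : s j / t < s i / t + 1 := lt_of_lt_of_le h2 (by exact add_le_add_left h1 1)
    have h4 : s j < (s i / t + 1) * t := (div_lt_iff₀ ht).mp h3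
    have h5 : s i / t * t = s i := div_mul_cancel₀ _ (ne_of_gt ht)
    nlinarith
  have hcover : ((Finset.range (m + 1)).image fun i => cent (π i)) ⊆
      ((Finset.range (m + 1)).image g).biUnion
        (fun v => (((Finset.range (m + 1)).filter fun i => g i = v)).image fun i => cent (π i)) := by
    intro y hy
    rcases Finset.mem_image.mp hy with ⟨i, hi, rfl⟩
    rw [Finset.mem_biUnion]
    exact ⟨g i, Finset.mem_image_of_mem g hi,
      Finset.mem_image_of_mem _ (Finset.mem_filter.mpr ⟨hi, rfl⟩)⟩
  have hfib : ∀ v : ℤ,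
      ((((Finset.range (m + 1)).filter fun i => g i = v)).image fun i => cent (π i)).card ≤ 7 ^ d := by
    intro v
    apply centers_card_le t ht cent hmem hcons
    intro i hi j hj
    have hgi := (Finset.mem_filter.mp hi).2
    have hgj := (Finset.mem_filter.mp hj).2
    have hgij : g i = g j := by rw [hgi, hgj]
    rcases le_total i j with hij | hij
    · rw [norm1_sub_rev]
      have := hpath i j hij
      have := hst i j hgij
      linarith
    · have := hpath j i hij
      have := hst j i hgij.symm
      linarith
  have hcount : (((Finset.range (m + 1)).image fun i => cent (π i)).card : ℕ)
      ≤ (B.toNat + 1) * 7 ^ d := by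
    calc (((Finset.range (m + 1)).image fun i => cent (π i)).card : ℕ)
        ≤ (((Finset.range (m + 1)).image g).biUnion
            (fun v => (((Finset.range (m + 1)).filter fun i => g i = v)).image
              fun i => cent (π i))).card := Finset.card_le_card hcover
      _ ≤ ∑ v ∈ (Finset.range (m + 1)).image g,
            ((((Finset.range (m + 1)).filter fun i => g i = v)).image
              fun i => cent (π i)).card := Finset.card_biUnion_le
      _ ≤ ∑ _v ∈ (Finset.range (m + 1)).image g, 7 ^ d :=
            Finset.sum_le_sum fun v _ => hfib v
      _ = ((Finset.range (m + 1)).image g).card * 7 ^ d := by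
            rw [Finset.sum_const, smul_eq_mul]
      _ ≤ (B.toNat + 1) * 7 ^ d := by
            apply Nat.mul_le_mul_right
            calc ((Finset.range (m + 1)).image g).card ≤ (Finset.Icc 0 B).card :=
                  Finset.card_le_card himg
              _ = (B + 1 - 0).toNat := Int.card_Icc 0 B
              _ = B.toNat + 1 := by omega
  -- final arithmetic
  have hdiv : Lmax / t = 4 * K * M := by
    rw [hLmax, hM, mul_div_assoc]
    congr 1
    rcases le_total t (normInf x) with hc | hc
    · rw [max_eq_right hc, max_eq_right ((one_le_div ht).mpr hc)]
    · rw [max_eq_left hc, max_eq_left ((div_le_one ht).mpr hc), div_self (ne_of_gt ht)]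
  have hBle : (B : ℝ) ≤ 4 * K * M := le_trans (Int.floor_le _) (le_of_eq hdiv)
  have htn : ((B.toNat : ℕ) : ℝ) = (B : ℝ) := by
    exact_mod_cast congrArg (fun z : ℤ => (z : ℝ)) (Int.toNat_of_nonneg hBnn)
  have hKM : (1 : ℝ) ≤ (K : ℝ) * M := by nlinarith
  calc (((Finset.range (m + 1)).image fun i => cent (π i)).card : ℝ)
      ≤ (((B.toNat + 1) * 7 ^ d : ℕ) : ℝ) := by exact_mod_cast hcount
    _ = (((B.toNat : ℕ) : ℝ) + 1) * 7 ^ d := by push_cast; ring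
    _ = ((B : ℝ) + 1) * 7 ^ d := by rw [htn]
    _ ≤ (4 * K * M + 1) * 7 ^ d := by nlinarith
    _ ≤ 5 * 7 ^ d * K * M := by nlinarith


end
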